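/- min(𝔟, 𝔯_{1/2}) ≤ ß: the minimum of the unbounding number and the unbisecting number is at most the subseries number. -/

import Mathlib

open Filter Cardinal

/-- Conditional convergence of a real series. -/
def CondConv (a : ℕ → ℝ) : Prop :=
  (∃ l : ℝ, Tendsto (fun N : ℕ => ∑ i ∈ Finset.range N, a i) atTop (nhds l)) ∧
  ¬ Summable (fun i => |a i|)

/-- The unbounding number `𝔟`. -/
noncomputable def frakB : Cardinal :=
  sInf {c : Cardinal | ∃ F : Set (ℕ → ℕ),
    (¬ ∃ g : ℕ → ℕ, ∀ f ∈ F, ∀ᶠ n in atTop, f n ≤ g n) ∧ #F = c}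

/-- `S` bisects `X`: the relative density of `S` in `X` tends to `1/2`. -/
def Bisects (S X : Set ℕ) : Prop :=
  Tendsto (fun n : ℕ =>
      ((S ∩ X ∩ Set.Iio n).ncard : ℝ) / ((X ∩ Set.Iio n).ncard))
    atTop (nhds (1 / 2))

/-- The unbisecting number `𝔯_{1/2}`: the least size of a family of infinite
sets of naturals not simultaneously bisected by any single set. -/
noncomputable def rHalf : Cardinal :=
  sInf {c : Cardinal | ∃ F : Set (Set ℕ), (∀ X ∈ F, X.Infinite) ∧
    (¬ ∃ S : Set ℕ, ∀ X ∈ F, Bisects S X) ∧ #F = c}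

/-- The subseries number `ß`. -/
noncomputable def ssNum : Cardinal :=
  sInf {c : Cardinal | ∃ 𝓘 : Set (Set ℕ),
    (∀ r : ℕ → ℝ, CondConv r → ∃ I ∈ 𝓘, ¬ ∃ l : ℝ,
      Tendsto (fun N : ℕ => ∑ i ∈ Finset.range N, Set.indicator I r i)
        atTop (nhds l)) ∧ #𝓘 = c}

attribute [local instance] Classical.propDecidable

lemma countIn (Y : Set ℕ) (n : ℕ) :
    (Y ∩ Set.Iio n).ncard = ((Finset.range n).filter (· ∈ Y)).card := by
  classical
  rw [← Set.ncard_coe_finset]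
  congr 1
  ext i
  simp [Set.mem_Iio, and_comm]

lemma tendsto_count_atTop {X : Set ℕ} (hX : X.Infinite) :
    Tendsto (fun n => (((Finset.range n).filter (· ∈ X)).card : ℕ)) atTop atTop := by
  classical
  rw [tendsto_atTop_atTop]
  intro K
  obtain ⟨t, htX, htc⟩ := hX.exists_subset_card_eq K
  refine ⟨t.sup id + 1, fun n hn => ?_⟩
  calc K = t.card := htc.symm
    _ ≤ _ := Finset.card_le_card (fun j hj => ?_)
  simp only [Finset.mem_filter, Finset.mem_range]
  exact ⟨lt_of_lt_of_le (Nat.lt_succ_of_le (Finset.le_sup (f := id) hj)) hn, htX hj⟩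

lemma filter_even_rank : ∀ (N : ℕ) (A : Finset ℕ), A.card = N →
    (A.filter (fun j => Even ((A.filter (· < j)).card))).card = (N + 1) / 2 := by
  classical
  intro N
  induction N with
  | zero => intro A hA; rw [Finset.card_eq_zero] at hA; subst hA; simp
  | succ N ih =>
    intro A hA
    have hne : A.Nonempty := Finset.card_pos.mp (by omega)
    set M := A.max' hne with hM
    set A' := A.erase M with hA'
    have hMA : M ∈ A := A.max'_mem hne
    have hcard' : A'.card = N := by
      rw [hA', Finset.card_erase_of_mem hMA, hA]; omega
    have key1 : ∀ j ∈ A', A.filter (· < j) = A'.filter (· < j) := by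
      intro j hj
      ext x
      simp only [Finset.mem_filter, hA', Finset.mem_erase]
      constructor
      · rintro ⟨hx, hxj⟩
        refine ⟨⟨?_, hx⟩, hxj⟩
        have : j ≤ M := A.le_max' j (Finset.mem_of_mem_erase hj)
        omega
      · rintro ⟨⟨_, hx⟩, hxj⟩; exact ⟨hx, hxj⟩
    have key2 : A.filter (· < M) = A' := by
      ext x
      simp only [Finset.mem_filter, hA', Finset.mem_erase]
      constructor
      · rintro ⟨hx, hxM⟩; exact ⟨by omega, hx⟩
      · rintro ⟨hne', hx⟩
        have : x ≤ M := A.le_max' x hx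
        exact ⟨hx, by omega⟩
    have hins : A = insert M A' := by rw [hA', Finset.insert_erase hMA]
    have hfc : A'.filter (fun j => Even ((A.filter (· < j)).card))
        = A'.filter (fun j => Even ((A'.filter (· < j)).card)) := by
      apply Finset.filter_congr
      intro j hj
      rw [key1 j hj]
    have hih := ih A' hcard'
    have hstep : (A.filter (fun j => Even ((A.filter (· < j)).card))).card
        = (A'.filter (fun j => Even ((A'.filter (· < j)).card))).card
          + (if Even N then 1 else 0) := by
      have h0 : A.filter (fun j => Even ((A.filter (· < j)).card))
          = (insert M A').filter (fun j => Even ((A.filter (· < j)).card)) := by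
        rw [← hins]
      rw [h0, Finset.filter_insert, key2, hcard']
      by_cases hN : Even N
      · rw [if_pos hN, if_pos hN, Finset.card_insert_of_notMem
          (fun hmem => (Finset.notMem_erase M A) (Finset.mem_of_mem_filter M hmem)), hfc]
      · rw [if_neg hN, if_neg hN, hfc, Nat.add_zero]
    rw [hstep, hih]
    rcases Nat.even_or_odd N with h | h
    · rw [if_pos h]
      obtain ⟨m, hm⟩ := h
      omega
    · rw [if_neg (Nat.not_even_iff_odd.mpr h)]
      obtain ⟨m, hm⟩ := h
      omega

lemma bisects_of_bound {S X : Set ℕ} (hX : X.Infinite) (C : ℕ)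
    (h : ∀ n : ℕ,
      (X ∩ Set.Iio n).ncard ≤ 2 * ((S ∩ X) ∩ Set.Iio n).ncard ∧
      2 * ((S ∩ X) ∩ Set.Iio n).ncard ≤ (X ∩ Set.Iio n).ncard + C) :
    Bisects S X := by
  classical
  set t : ℕ → ℕ := fun n => (X ∩ Set.Iio n).ncard with ht
  set d : ℕ → ℕ := fun n => ((S ∩ X) ∩ Set.Iio n).ncard with hd
  have htT : Tendsto (fun n => (t n : ℝ)) atTop atTop := by
    apply tendsto_natCast_atTop_atTop.comp
    apply (tendsto_count_atTop hX).congr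
    intro n
    rw [ht]
    exact (countIn X n).symm
  have hpos : ∀ᶠ n in atTop, (1:ℝ) ≤ t n := htT.eventually_ge_atTop 1
  have hup : Tendsto (fun n => ((t n : ℝ) + C) / (2 * t n)) atTop (nhds (1/2)) := by
    have h0 : Tendsto (fun n : ℕ => ((C:ℝ)/2) / (t n)) atTop (nhds 0) :=
      Tendsto.div_atTop (tendsto_const_nhds (x := ((C:ℝ)/2))) htT
    have h1 : Tendsto (fun n => (1:ℝ)/2 + (C/2) / (t n)) atTop (nhds (1/2)) := by
      have h2 := h0.const_add ((1:ℝ)/2)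
      simpa using h2
    apply h1.congr'
    filter_upwards [hpos] with n hn
    have hne : (t n : ℝ) ≠ 0 := by linarith
    field_simp
  have hlow : Tendsto (fun _ : ℕ => (1:ℝ)/2) atTop (nhds (1/2)) := tendsto_const_nhds
  have key : Tendsto (fun n : ℕ => (d n : ℝ) / (t n)) atTop (nhds (1/2)) := by
    apply tendsto_of_tendsto_of_tendsto_of_le_of_le' hlow hup
    · filter_upwards [hpos] with n hn
      rw [le_div_iff₀ (by linarith)]
      have h1 := (h n).1
      have h2 : (t n : ℝ) ≤ 2 * d n := by exact_mod_cast h1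
      linarith
    · filter_upwards [hpos] with n hn
      rw [div_le_div_iff₀ (by linarith) (by linarith)]
      have h1 := (h n).2
      have h2 : 2 * (d n : ℝ) ≤ t n + C := by exact_mod_cast h1
      nlinarith
  exact key

lemma finite_bisected {F : Set (Set ℕ)} (hF : F.Finite) (hinf : ∀ X ∈ F, X.Infinite) :
    ∃ S : Set ℕ, ∀ X ∈ F, Bisects S X := by
  classical
  set τ : ℕ → Set (Set ℕ) := fun i => {Y | Y ∈ F ∧ i ∈ Y} with hτ
  set cnt : ℕ → ℕ := fun i => ((Finset.range i).filter (fun j => τ j = τ i)).card with hcnt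
  refine ⟨{i | Even (cnt i)}, fun X hXF => ?_⟩
  apply bisects_of_bound (hinf X hXF) (2 ^ hF.toFinset.card)
  intro n
  set Vn : Finset (Set (Set ℕ)) := (Finset.range n).image τ with hVn
  set W : Finset (Set (Set ℕ)) := Vn.filter (fun v => X ∈ v) with hW
  set fib : Set (Set ℕ) → Finset ℕ := fun v => (Finset.range n).filter (fun j => τ j = v) with hfib
  -- t decomposition
  have htdec : (X ∩ Set.Iio n).ncard = ∑ v ∈ W, (fib v).card := by
    rw [countIn]
    rw [Finset.card_eq_sum_card_fiberwise (f := τ) (t := W)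
      (fun j hj => by
        simp only [Finset.mem_coe, Finset.mem_filter, Finset.mem_range] at hj
        simp only [Finset.mem_coe, hW, Finset.mem_filter, hVn, Finset.mem_image]
        exact ⟨⟨j, Finset.mem_range.mpr hj.1, rfl⟩, ⟨hXF, hj.2⟩⟩)]
    apply Finset.sum_congr rfl
    intro v hv
    congr 1
    ext j
    simp only [Finset.mem_filter, Finset.mem_range, hfib]
    constructor
    · rintro ⟨⟨hj, _⟩, hτj⟩; exact ⟨hj, hτj⟩
    · rintro ⟨hj, hτj⟩
      simp only [hW, Finset.mem_filter] at hv
      have hXv : X ∈ v := hv.2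
      rw [← hτj] at hXv
      exact ⟨⟨hj, hXv.2⟩, hτj⟩
  -- d decomposition
  have hddec : (({i | Even (cnt i)} ∩ X) ∩ Set.Iio n).ncard = ∑ v ∈ W, ((fib v).card + 1) / 2 := by
    rw [countIn]
    rw [Finset.card_eq_sum_card_fiberwise (f := τ) (t := W)
      (fun j hj => by
        simp only [Finset.mem_coe, Finset.mem_filter, Finset.mem_range, Set.mem_inter_iff, Set.mem_setOf_eq] at hj
        simp only [Finset.mem_coe, hW, Finset.mem_filter, hVn, Finset.mem_image]
        exact ⟨⟨j, Finset.mem_range.mpr hj.1, rfl⟩, ⟨hXF, hj.2.2⟩⟩)]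
    apply Finset.sum_congr rfl
    intro v hv
    have hXv : X ∈ v := by
      have hv' := hv
      simp only [hW, Finset.mem_filter] at hv'
      exact hv'.2
    rw [← filter_even_rank (fib v).card (fib v) rfl]
    congr 1
    ext j
    have hfibmem : ∀ x w, x ∈ fib w ↔ x < n ∧ τ x = w := by
      intro x w
      simp only [hfib, Finset.mem_filter, Finset.mem_range]
    have heq2 : ∀ (hjn : j < n) (hτj : τ j = v),
        cnt j = ((fib v).filter (· < j)).card := by
      intro hjn hτj
      have : cnt j = ((Finset.range j).filter (fun x => τ x = τ j)).card := by rw [hcnt]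
      rw [this, hτj]
      congr 1
      ext x
      simp only [Finset.mem_filter, Finset.mem_range, hfibmem]
      constructor
      · rintro ⟨hx, hτx⟩; exact ⟨⟨lt_trans hx hjn, hτx⟩, hx⟩
      · rintro ⟨⟨_, hτx⟩, hx⟩; exact ⟨hx, hτx⟩
    simp only [Finset.mem_filter, Finset.mem_range, Set.mem_inter_iff, Set.mem_setOf_eq,
      hfibmem]
    constructor
    · rintro ⟨⟨hjn, he, hjX⟩, hτj⟩
      refine ⟨⟨hjn, hτj⟩, ?_⟩
      rw [← heq2 hjn hτj]; exact he
    · rintro ⟨⟨hjn, hτj⟩, he⟩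
      refine ⟨⟨hjn, ?_, ?_⟩, hτj⟩
      · rw [heq2 hjn hτj]; exact he
      · have hXτ : X ∈ τ j := by rw [hτj]; exact hXv
        exact hXτ.2
  -- W bound
  have hWb : W.card ≤ 2 ^ hF.toFinset.card := by
    calc W.card ≤ Vn.card := Finset.card_le_card (Finset.filter_subset _ _)
    _ ≤ hF.toFinset.powerset.card := by
        apply Finset.card_le_card_of_injOn (fun v => hF.toFinset.filter (fun Y => Y ∈ v))
        · intro v _
          exact Finset.mem_powerset.mpr (Finset.filter_subset _ _)
        · intro v hv v' hv' heq
          simp only [hVn, Finset.coe_image, Set.mem_image] at hv hv'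
          obtain ⟨j, _, rfl⟩ := hv
          obtain ⟨j', _, rfl⟩ := hv'
          simp only at heq
          ext Y
          have hiff := Finset.ext_iff.mp heq Y
          simp only [Finset.mem_filter, Set.Finite.mem_toFinset] at hiff
          have hj : Y ∈ τ j ↔ Y ∈ F ∧ j ∈ Y := Iff.rfl
          have hj' : Y ∈ τ j' ↔ Y ∈ F ∧ j' ∈ Y := Iff.rfl
          constructor
          · intro hY
            have hYF : Y ∈ F := (hj.mp hY).1
            exact (hiff.mp ⟨hYF, hY⟩).2
          · intro hY
            have hYF : Y ∈ F := (hj'.mp hY).1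
            exact (hiff.mpr ⟨hYF, hY⟩).2
    _ = 2 ^ hF.toFinset.card := Finset.card_powerset _
  rw [htdec, hddec]
  constructor
  · rw [Finset.mul_sum]
    apply Finset.sum_le_sum
    intro v _
    omega
  · rw [Finset.mul_sum]
    calc ∑ v ∈ W, 2 * (((fib v).card + 1) / 2)
        ≤ ∑ v ∈ W, ((fib v).card + 1) := Finset.sum_le_sum (fun v _ => by omega)
    _ = (∑ v ∈ W, (fib v).card) + W.card := by
        rw [Finset.sum_add_distrib, Finset.sum_const, smul_eq_mul, mul_one]
    _ ≤ (∑ v ∈ W, (fib v).card) + 2 ^ hF.toFinset.card := by omega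

lemma countIn_succ (Y : Set ℕ) (n : ℕ) :
    (Y ∩ Set.Iio (n+1)).ncard = (Y ∩ Set.Iio n).ncard + (if n ∈ Y then 1 else 0) := by
  classical
  rw [countIn, countIn, Finset.range_add_one, Finset.filter_insert]
  by_cases h : n ∈ Y
  · rw [if_pos h, if_pos h, Finset.card_insert_of_notMem (by simp)]
  · rw [if_neg h, if_neg h, add_zero]

lemma count_le (Y : Set ℕ) (n : ℕ) : (Y ∩ Set.Iio n).ncard ≤ n := by
  rw [countIn]
  calc ((Finset.range n).filter (· ∈ Y)).card ≤ (Finset.range n).card :=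
        Finset.card_filter_le _ _
    _ = n := Finset.card_range n

lemma count_tendsto {X : Set ℕ} (hX : X.Infinite) :
    Tendsto (fun n => ((X ∩ Set.Iio n).ncard : ℝ)) atTop atTop := by
  apply tendsto_natCast_atTop_atTop.comp
  apply (tendsto_count_atTop hX).congr
  intro n
  exact (countIn X n).symm

lemma signsum_eq (S X : Set ℕ) (n : ℕ) :
    ∑ i ∈ Finset.range n, Set.indicator X (fun i => if i ∈ S then (1:ℝ) else -1) i
      = 2 * (((S ∩ X) ∩ Set.Iio n).ncard : ℝ) - ((X ∩ Set.Iio n).ncard : ℝ) := by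
  induction n with
  | zero =>
    have h0 : (Set.Iio 0 : Set ℕ) = ∅ := by ext x; simp
    simp [h0]
  | succ n ih =>
    rw [Finset.sum_range_succ, ih, countIn_succ, countIn_succ]
    by_cases hX : n ∈ X
    · by_cases hS : n ∈ S
      · have h1 : n ∈ S ∩ X := ⟨hS, hX⟩
        simp only [Set.indicator_apply, if_pos hX, if_pos hS, if_pos h1]
        push_cast
        ring
      · have h1 : n ∉ S ∩ X := fun h => hS h.1
        simp only [Set.indicator_apply, if_pos hX, if_neg hS, if_neg h1]
        push_cast
        ring
    · have h1 : n ∉ S ∩ X := fun h => hX h.2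
      simp only [Set.indicator_apply, if_neg hX, if_neg h1]
      push_cast
      ring

lemma rate {S X : Set ℕ} (hX : X.Infinite) (hb : Bisects S X) (k : ℕ) :
    ∀ᶠ n in atTop,
      |2 * (((S ∩ X) ∩ Set.Iio n).ncard : ℝ) - ((X ∩ Set.Iio n).ncard : ℝ)|
        ≤ (n : ℝ) / 2 ^ k := by
  have htT := count_tendsto hX
  have hpos : ∀ᶠ n in atTop, (1:ℝ) ≤ ((X ∩ Set.Iio n).ncard : ℝ) := htT.eventually_ge_atTop 1
  have hev := Metric.tendsto_nhds.mp hb (1 / 2^(k+1)) (by positivity)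
  filter_upwards [hev, hpos] with n hn hp
  set d : ℝ := (((S ∩ X) ∩ Set.Iio n).ncard : ℝ) with hd
  set t : ℝ := ((X ∩ Set.Iio n).ncard : ℝ) with htt
  have htpos : (0:ℝ) < t := by linarith
  have hne : t ≠ 0 := ne_of_gt htpos
  have hdist : |d / t - 1/2| < 1 / 2^(k+1) := by
    have : dist (d / t) (1/2) = |d / t - 1/2| := Real.dist_eq _ _
    rw [← this]
    exact hn
  have hiden : 2 * d - t = (d / t - 1/2) * (2 * t) := by
    field_simp
  have htn : t ≤ (n : ℝ) := by
    have := count_le X n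
    rw [htt]
    exact_mod_cast this
  rw [hiden, abs_mul]
  have h2t : |2 * t| = 2 * t := abs_of_pos (by linarith)
  rw [h2t]
  calc |d / t - 1/2| * (2 * t) ≤ (1 / 2^(k+1)) * (2 * t) := by
        apply mul_le_mul_of_nonneg_right (le_of_lt hdist) (by linarith)
    _ = t / 2^k := by
        rw [pow_succ]
        field_simp
    _ ≤ (n : ℝ) / 2^k := by
        apply div_le_div_of_nonneg_right htn (by positivity)

lemma univ_witness : ∀ r : ℕ → ℝ,
    ((∃ l : ℝ, Tendsto (fun N : ℕ => ∑ i ∈ Finset.range N, r i) atTop (nhds l)) ∧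
      ¬ Summable (fun i => |r i|)) →
    ∃ I : Set ℕ, ¬ ∃ l : ℝ,
      Tendsto (fun N : ℕ => ∑ i ∈ Finset.range N, Set.indicator I r i) atTop (nhds l) := by
  intro r ⟨⟨l, hl⟩, hns⟩
  refine ⟨{i | 0 < r i}, ?_⟩
  rintro ⟨l', hl'⟩
  have hP : Tendsto (fun N : ℕ => ∑ i ∈ Finset.range N, |r i|) atTop atTop := by
    by_contra h
    exact hns ((summable_iff_not_tendsto_nat_atTop_of_nonneg (fun n => abs_nonneg _)).mpr h)
  have hiden : ∀ N : ℕ, ∑ i ∈ Finset.range N, Set.indicator {i | 0 < r i} r i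
      = ((∑ i ∈ Finset.range N, r i) + (∑ i ∈ Finset.range N, |r i|)) / 2 := by
    intro N
    rw [← Finset.sum_add_distrib, Finset.sum_div]
    apply Finset.sum_congr rfl
    intro i _
    by_cases h : 0 < r i
    · rw [Set.indicator_of_mem (show i ∈ {j | 0 < r j} from h) r, abs_of_pos h]
      ring
    · rw [Set.indicator_of_notMem (show i ∉ {j | 0 < r j} from h) r, abs_of_nonpos (by linarith [not_lt.mp h])]
      ring
  have hT : Tendsto (fun N : ℕ => ∑ i ∈ Finset.range N, Set.indicator {i | 0 < r i} r i)
      atTop atTop := by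
    apply Tendsto.congr (fun N => (hiden N).symm)
    exact (hl.add_atTop hP).atTop_div_const (by norm_num)
  exact not_tendsto_atTop_of_tendsto_nhds hl' hT

/-! ### Block construction -/

noncomputable def bIdx (nseq : ℕ → ℕ) (i : ℕ) : ℕ :=
  Nat.findGreatest (fun k => nseq k ≤ i) i

noncomputable def amp (nseq : ℕ → ℕ) (i : ℕ) : ℝ := 1 / (nseq (bIdx nseq i + 1) : ℝ)

noncomputable def rr (S : Set ℕ) (nseq : ℕ → ℕ) (i : ℕ) : ℝ :=
  if i ∈ S then amp nseq i else -(amp nseq i)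

noncomputable def sgn (S : Set ℕ) (i : ℕ) : ℝ := if i ∈ S then 1 else -1

section Blocks

variable {nseq : ℕ → ℕ}

lemma nseq_ge_id (hsm : StrictMono nseq) (k : ℕ) : k ≤ nseq k := by
  induction k with
  | zero => exact Nat.zero_le _
  | succ k ih =>
    have h2 : nseq k < nseq (k+1) := hsm (by omega)
    omega

lemma bIdx_le (h0 : nseq 0 = 0) (i : ℕ) : nseq (bIdx nseq i) ≤ i := by
  apply Nat.findGreatest_spec (m := 0) (P := fun k => nseq k ≤ i) (Nat.zero_le i)
  rw [h0]
  exact Nat.zero_le i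

lemma lt_bIdx_succ (hsm : StrictMono nseq) (h0 : nseq 0 = 0) (i : ℕ) : i < nseq (bIdx nseq i + 1) := by
  by_contra hcon
  push_neg at hcon
  have h1 : bIdx nseq i + 1 ≤ i := le_trans (nseq_ge_id hsm _) hcon
  exact absurd hcon
    (Nat.findGreatest_is_greatest (P := fun k => nseq k ≤ i) (Nat.lt_succ_self (bIdx nseq i)) h1)

lemma bIdx_ge (hsm : StrictMono nseq) {k i : ℕ} (h : nseq k ≤ i) : k ≤ bIdx nseq i :=
  Nat.le_findGreatest (P := fun j => nseq j ≤ i) (le_trans (nseq_ge_id hsm k) h) h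

lemma bIdx_uniq (hsm : StrictMono nseq) (h0 : nseq 0 = 0) {k i : ℕ} (h1 : nseq k ≤ i) (h2 : i < nseq (k+1)) :
    bIdx nseq i = k := by
  have hge : k ≤ bIdx nseq i := bIdx_ge hsm h1
  have hle : bIdx nseq i ≤ k := by
    by_contra hcon
    push_neg at hcon
    have : nseq (k+1) ≤ nseq (bIdx nseq i) := hsm.monotone hcon
    have := bIdx_le h0 (nseq := nseq) i
    omega
  omega

lemma bIdx_tendsto (hsm : StrictMono nseq) : Tendsto (bIdx nseq) atTop atTop := by
  rw [tendsto_atTop_atTop]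
  intro K
  exact ⟨nseq K, fun i hi => bIdx_ge hsm hi⟩

lemma nseq_succ_pos (hsm : StrictMono nseq) (h0 : nseq 0 = 0) (k : ℕ) : (0:ℝ) < (nseq (k+1) : ℝ) := by
  have : nseq 0 < nseq (k+1) := hsm (Nat.succ_pos k)
  rw [h0] at this
  exact_mod_cast this

lemma block_sum (hsm : StrictMono nseq) (h0 : nseq 0 = 0) (S X : Set ℕ) {k m n : ℕ}
    (hm : nseq k ≤ m) (hmn : m ≤ n) (hn : n ≤ nseq (k+1)) :
    (∑ i ∈ Finset.range n, Set.indicator X (rr S nseq) i)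
      - (∑ i ∈ Finset.range m, Set.indicator X (rr S nseq) i)
    = (1/(nseq (k+1) : ℝ)) *
      ((∑ i ∈ Finset.range n, Set.indicator X (sgn S) i)
        - (∑ i ∈ Finset.range m, Set.indicator X (sgn S) i)) := by
  rw [← Finset.sum_Ico_eq_sub _ hmn, ← Finset.sum_Ico_eq_sub _ hmn, Finset.mul_sum]
  apply Finset.sum_congr rfl
  intro i hi
  rw [Finset.mem_Ico] at hi
  have hβ : bIdx nseq i = k :=
    bIdx_uniq hsm h0 (le_trans hm hi.1) (lt_of_lt_of_le hi.2 hn)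
  by_cases hX : i ∈ X
  · rw [Set.indicator_of_mem hX, Set.indicator_of_mem hX]
    rw [rr, sgn, amp, hβ]
    by_cases hS : i ∈ S
    · rw [if_pos hS, if_pos hS, mul_one]
    · rw [if_neg hS, if_neg hS, mul_neg_one]
  · rw [Set.indicator_of_notMem hX, Set.indicator_of_notMem hX, mul_zero]

lemma conv_of_rate (hsm : StrictMono nseq) (h0 : nseq 0 = 0) (S X : Set ℕ) (K : ℕ)
    (hQ : ∀ k, K ≤ k → ∀ n, nseq k ≤ n →
      |2 * (((S ∩ X) ∩ Set.Iio n).ncard : ℝ) - ((X ∩ Set.Iio n).ncard : ℝ)|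
        ≤ (n:ℝ)/2^k) :
    ∃ l, Tendsto (fun N : ℕ => ∑ i ∈ Finset.range N, Set.indicator X (rr S nseq) i)
      atTop (nhds l) := by
  set A : ℕ → ℝ := fun N => ∑ i ∈ Finset.range N, Set.indicator X (rr S nseq) i with hA
  set e : ℕ → ℝ := fun N => ∑ i ∈ Finset.range N, Set.indicator X (sgn S) i with he
  have hebound : ∀ k, K ≤ k → ∀ n, nseq k ≤ n → |e n| ≤ (n:ℝ)/2^k := by
    intro k hk n hn
    have : e n = 2 * (((S ∩ X) ∩ Set.Iio n).ncard : ℝ) - ((X ∩ Set.Iio n).ncard : ℝ) :=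
      signsum_eq S X n
    rw [this]
    exact hQ k hk n hn
  have hblockbound : ∀ k, K ≤ k → ∀ m n, nseq k ≤ m → m ≤ n → n ≤ nseq (k+1) →
      |A n - A m| ≤ 2/2^k := by
    intro k hk m n hm hmn hn
    rw [hA]
    rw [block_sum hsm h0 S X hm hmn hn]
    rw [abs_mul]
    have hpos := nseq_succ_pos hsm h0 k
    have h1 : |e n| ≤ (nseq (k+1) : ℝ)/2^k := by
      calc |e n| ≤ (n:ℝ)/2^k := hebound k hk n (le_trans hm hmn)
        _ ≤ (nseq (k+1) : ℝ)/2^k := by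
            apply div_le_div_of_nonneg_right ?_ (by positivity)
            exact_mod_cast hn
    have h2 : |e m| ≤ (nseq (k+1) : ℝ)/2^k := by
      calc |e m| ≤ (m:ℝ)/2^k := hebound k hk m hm
        _ ≤ (nseq (k+1) : ℝ)/2^k := by
            apply div_le_div_of_nonneg_right ?_ (by positivity)
            exact_mod_cast le_trans hmn hn
    have h3 : |e n - e m| ≤ 2 * ((nseq (k+1) : ℝ)/2^k) := by
      calc |e n - e m| ≤ |e n| + |e m| := abs_sub _ _
        _ ≤ 2 * ((nseq (k+1) : ℝ)/2^k) := by linarith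
    have h4 : |1/(nseq (k+1) : ℝ)| = 1/(nseq (k+1) : ℝ) := abs_of_pos (by positivity)
    rw [h4]
    calc (1/(nseq (k+1) : ℝ)) * |e n - e m|
        ≤ (1/(nseq (k+1) : ℝ)) * (2 * ((nseq (k+1) : ℝ)/2^k)) := by
          apply mul_le_mul_of_nonneg_left h3 (by positivity)
      _ = 2/2^k := by
          field_simp
  have hgeom : Summable (fun k : ℕ => (2:ℝ)/2^k) := by
    have h1 : Summable (fun k : ℕ => (2:ℝ) * (1/2)^k) := summable_geometric_two.mul_left 2
    apply h1.congr
    intro k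
    rw [div_pow, one_pow, mul_one_div]
  have hcauchy : CauchySeq (fun k => A (nseq k)) := by
    apply cauchySeq_of_summable_dist
    rw [← summable_nat_add_iff K]
    simp only [Nat.succ_eq_add_one]
    apply Summable.of_nonneg_of_le (fun k => dist_nonneg) ?_ hgeom
    intro k
    have hd : dist (A (nseq (k + K))) (A (nseq (k + K + 1)))
        = |A (nseq (k + K + 1)) - A (nseq (k + K))| := by
      rw [Real.dist_eq, abs_sub_comm]
    rw [hd]
    calc |A (nseq (k + K + 1)) - A (nseq (k + K))| ≤ 2/2^(k+K) := by
          apply hblockbound (k+K) (by omega) (nseq (k+K)) (nseq (k+K+1)) le_rfl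
            (le_of_lt (hsm (Nat.lt_succ_self _))) le_rfl
      _ ≤ 2/2^k := by
          apply div_le_div_of_nonneg_left (by norm_num) (by positivity)
          apply pow_le_pow_right₀ (by norm_num)
          omega
  obtain ⟨L, hL⟩ := cauchySeq_tendsto_of_complete hcauchy
  refine ⟨L, ?_⟩
  have h1 : Tendsto (fun n => A (nseq (bIdx nseq n))) atTop (nhds L) :=
    hL.comp (bIdx_tendsto hsm)
  have h2 : Tendsto (fun n => A n - A (nseq (bIdx nseq n))) atTop (nhds 0) := by
    apply squeeze_zero_norm' (a := fun n => (2:ℝ)/2^(bIdx nseq n))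
    · filter_upwards [eventually_ge_atTop (nseq K)] with n hn
      have hk : K ≤ bIdx nseq n := bIdx_ge hsm hn
      rw [Real.norm_eq_abs]
      exact hblockbound (bIdx nseq n) hk (nseq (bIdx nseq n)) n le_rfl
        (bIdx_le h0 n) (le_of_lt (lt_bIdx_succ hsm h0 n))
    · have hg0 : Tendsto (fun k : ℕ => (2:ℝ)/2^k) atTop (nhds 0) := by
        have h3 : Tendsto (fun k : ℕ => ((1:ℝ)/2)^k) atTop (nhds 0) :=
          tendsto_pow_atTop_nhds_zero_of_lt_one (by norm_num) (by norm_num)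
        have h4 := h3.const_mul (2:ℝ)
        rw [mul_zero] at h4
        apply h4.congr
        intro k
        rw [div_pow, one_pow, mul_one_div]
      exact hg0.comp (bIdx_tendsto hsm)
  have h3 := h2.add h1
  rw [zero_add] at h3
  apply h3.congr
  intro n
  ring

lemma rr_not_summable (hsm : StrictMono nseq) (h0 : nseq 0 = 0) (S : Set ℕ) (hg2 : ∀ k, 2 * nseq k + 1 ≤ nseq (k+1)) :
    ¬ Summable (fun i => |rr S nseq i|) := by
  intro hsum
  have hamp : ∀ i, (0:ℝ) < amp nseq i := by
    intro i
    rw [amp]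
    have := nseq_succ_pos hsm h0 (bIdx nseq i)
    positivity
  have habs : ∀ i, |rr S nseq i| = amp nseq i := by
    intro i
    rw [rr]
    by_cases hS : i ∈ S
    · rw [if_pos hS, abs_of_pos (hamp i)]
    · rw [if_neg hS, abs_neg, abs_of_pos (hamp i)]
  have hlow : ∀ K : ℕ, (K:ℝ)/2 ≤ ∑ i ∈ Finset.range (nseq K), |rr S nseq i| := by
    intro K
    induction K with
    | zero => rw [h0]; simp
    | succ K ih =>
      have hle : nseq K ≤ nseq (K+1) := le_of_lt (hsm (Nat.lt_succ_self K))
      have hsplit := Finset.sum_Ico_eq_sub (fun i => |rr S nseq i|) hle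
      have hico : ∑ i ∈ Finset.Ico (nseq K) (nseq (K+1)), |rr S nseq i|
          = ((nseq (K+1) - nseq K : ℕ) : ℝ) * (1/(nseq (K+1) : ℝ)) := by
        rw [Finset.sum_congr rfl (fun i hi => ?_), Finset.sum_const, Nat.card_Ico,
          nsmul_eq_mul]
        rw [Finset.mem_Ico] at hi
        rw [habs i, amp, bIdx_uniq hsm h0 hi.1 hi.2]
      have hposK := nseq_succ_pos hsm h0 K
      have hhalf : (1:ℝ)/2 ≤ ((nseq (K+1) - nseq K : ℕ) : ℝ) * (1/(nseq (K+1) : ℝ)) := by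
        have hnat : nseq (K+1) ≤ 2 * (nseq (K+1) - nseq K) := by
          have := hg2 K
          omega
        have hcast : (nseq (K+1) : ℝ) ≤ 2 * ((nseq (K+1) - nseq K : ℕ) : ℝ) := by
          exact_mod_cast hnat
        rw [mul_one_div, le_div_iff₀ hposK]
        linarith
      have : ∑ i ∈ Finset.range (nseq (K+1)), |rr S nseq i|
          = (∑ i ∈ Finset.range (nseq K), |rr S nseq i|)
            + ∑ i ∈ Finset.Ico (nseq K) (nseq (K+1)), |rr S nseq i| := by
        rw [hsplit]; ring
      rw [this, hico]
      push_cast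
      linarith
  obtain ⟨K, hK⟩ := exists_nat_gt (2 * ∑' i, |rr S nseq i|)
  have hle := Summable.sum_le_tsum (Finset.range (nseq K)) (fun i _ => abs_nonneg _) hsum
  have := hlow K
  linarith

end Blocks

lemma finite_conv (I : Set ℕ) (hI : I.Finite) (r : ℕ → ℝ) :
    ∃ l, Tendsto (fun N : ℕ => ∑ i ∈ Finset.range N, Set.indicator I r i)
      atTop (nhds l) := by
  classical
  set M : ℕ := hI.toFinset.sup id + 1 with hM
  refine ⟨∑ i ∈ Finset.range M, Set.indicator I r i, ?_⟩
  apply Tendsto.congr' ?_ (tendsto_const_nhds)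
  filter_upwards [eventually_ge_atTop M] with N hN
  apply Finset.sum_subset (Finset.range_subset_range.mpr hN)
  intro i hiN hiM
  apply Set.indicator_of_notMem
  intro hiI
  apply hiM
  rw [Finset.mem_range]
  have : i ≤ hI.toFinset.sup id := Finset.le_sup (f := id) (hI.mem_toFinset.mpr hiI)
  omega

/-- `min(𝔟, 𝔯_{1/2})` ≤ `ß`. -/
theorem min_b_rHalf_le_ss : min frakB rHalf ≤ ssNum := by
  classical
  have hne : {c : Cardinal | ∃ 𝓘 : Set (Set ℕ),
      (∀ r : ℕ → ℝ, CondConv r → ∃ I ∈ 𝓘, ¬ ∃ l : ℝ,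
        Tendsto (fun N : ℕ => ∑ i ∈ Finset.range N, Set.indicator I r i)
          atTop (nhds l)) ∧ #𝓘 = c}.Nonempty := by
    refine ⟨#(Set.univ : Set (Set ℕ)), Set.univ, ?_, rfl⟩
    intro r hr
    obtain ⟨I, hI⟩ := univ_witness r hr
    exact ⟨I, Set.mem_univ I, hI⟩
  apply le_csInf hne
  rintro c ⟨𝓘, hP, rfl⟩
  by_contra hcon
  rw [not_le] at hcon
  obtain ⟨hb, hr⟩ := lt_min_iff.mp hcon
  -- the bisected family
  set F' : Set (Set ℕ) := insert Set.univ {I | I ∈ 𝓘 ∧ I.Infinite} with hF'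
  have hF'inf : ∀ X ∈ F', X.Infinite := by
    rintro X hX
    rcases Set.mem_insert_iff.mp hX with rfl | hX2
    · exact Set.infinite_univ
    · exact hX2.2
  have hcard : ¬ F'.Finite → #F' ≤ #𝓘 := by
    intro hFi
    have hsub : {I | I ∈ 𝓘 ∧ I.Infinite} ⊆ 𝓘 := fun I hI => hI.1
    have hsubinf : {I | I ∈ 𝓘 ∧ I.Infinite}.Infinite := by
      rw [Set.Infinite]
      intro h
      exact hFi (h.insert _)
    have h𝓘inf : ℵ₀ ≤ #𝓘 := by
      have h1 : ℵ₀ ≤ #({I | I ∈ 𝓘 ∧ I.Infinite}) :=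
        Cardinal.infinite_iff.mp (Set.infinite_coe_iff.mpr hsubinf)
      exact le_trans h1 (Cardinal.mk_le_mk_of_subset hsub)
    calc #F' ≤ #({I | I ∈ 𝓘 ∧ I.Infinite}) + 1 := Cardinal.mk_insert_le
      _ ≤ #𝓘 + 1 := add_le_add (Cardinal.mk_le_mk_of_subset hsub) le_rfl
      _ = #𝓘 := Cardinal.add_one_eq h𝓘inf
  -- step 1 : the bisector S
  have hSex : ∃ S : Set ℕ, ∀ X ∈ F', Bisects S X := by
    by_cases hfin : F'.Finite
    · exact finite_bisected hfin hF'inf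
    · by_contra hno
      have hmem : #F' ∈ {c : Cardinal | ∃ F : Set (Set ℕ), (∀ X ∈ F, X.Infinite) ∧
          (¬ ∃ S : Set ℕ, ∀ X ∈ F, Bisects S X) ∧ #F = c} := ⟨F', hF'inf, hno, rfl⟩
      have h1 : rHalf ≤ #F' := csInf_le' hmem
      have h2 := hcard hfin
      exact absurd hr (not_lt.mpr (le_trans h1 h2))
  obtain ⟨S, hS⟩ := hSex
  -- step 2 : rate functions and domination
  set Q : Set ℕ → ℕ → ℕ → Prop := fun X k n =>
    |2 * (((S ∩ X) ∩ Set.Iio n).ncard : ℝ) - ((X ∩ Set.Iio n).ncard : ℝ)| ≤ (n:ℝ)/2^k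
    with hQdef
  set f : Set ℕ → ℕ → ℕ := fun X k => sInf {N | ∀ n, N ≤ n → Q X k n} with hfdef
  have hfspec : ∀ X ∈ F', ∀ k, ∀ n, f X k ≤ n → Q X k n := by
    intro X hX k
    have hev := rate (hF'inf X hX) (hS X hX) k
    obtain ⟨N, hN⟩ := eventually_atTop.mp hev
    have hnemp : {N | ∀ n, N ≤ n → Q X k n}.Nonempty := ⟨N, fun n hn => hN n hn⟩
    exact Nat.sInf_mem hnemp
  have hdom : ∃ g : ℕ → ℕ, ∀ X ∈ F', ∀ᶠ k in atTop, f X k ≤ g k := by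
    by_cases hGfin : (f '' F').Finite
    · refine ⟨fun k => hGfin.toFinset.sup (fun h => h k), ?_⟩
      intro X hX
      apply Eventually.of_forall
      intro k
      exact Finset.le_sup (f := fun h => h k) (hGfin.mem_toFinset.mpr ⟨X, hX, rfl⟩)
    · by_contra hno
      push_neg at hno
      have hprop : ¬ ∃ g : ℕ → ℕ, ∀ h ∈ f '' F', ∀ᶠ n in atTop, h n ≤ g n := by
        rintro ⟨g, hgg⟩
        obtain ⟨X, hX, hbad⟩ := hno g
        exact hbad ((hgg (f X) ⟨X, hX, rfl⟩).mono fun n hn => not_lt.mpr hn)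
      have hmem : #(f '' F') ∈ {c : Cardinal | ∃ F : Set (ℕ → ℕ),
          (¬ ∃ g : ℕ → ℕ, ∀ f ∈ F, ∀ᶠ n in atTop, f n ≤ g n) ∧ #F = c} :=
        ⟨f '' F', hprop, rfl⟩
      have h1 : frakB ≤ #(f '' F') := csInf_le' hmem
      have h2 : #(f '' F') ≤ #F' := Cardinal.mk_image_le
      have hFi : ¬ F'.Finite := fun h => hGfin (h.image f)
      have h3 := hcard hFi
      exact absurd hb (not_lt.mpr (le_trans h1 (le_trans h2 h3)))
  obtain ⟨g, hg⟩ := hdom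
  -- step 3 : block sequence
  set nseq : ℕ → ℕ := fun k => Nat.rec 0 (fun k' ih => max (g (k'+1)) (2 * ih + 1)) k
    with hnseq
  have h0 : nseq 0 = 0 := rfl
  have hsucc : ∀ k, nseq (k+1) = max (g (k+1)) (2 * nseq k + 1) := fun k => rfl
  have hg2 : ∀ k, 2 * nseq k + 1 ≤ nseq (k+1) := fun k => by
    rw [hsucc]; exact le_max_right _ _
  have hsm : StrictMono nseq := strictMono_nat_of_lt_succ (fun k => by
    have := hg2 k; omega)
  have hgn : ∀ k, 1 ≤ k → g k ≤ nseq k := by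
    intro k hk
    obtain ⟨k', rfl⟩ := Nat.exists_eq_add_of_le hk
    rw [show 1 + k' = k' + 1 by omega, hsucc]
    exact le_max_left _ _
  -- step 4 : convergence for every member of F'
  have keyX : ∀ X ∈ F', ∃ l, Tendsto
      (fun N : ℕ => ∑ i ∈ Finset.range N, Set.indicator X (rr S nseq) i)
      atTop (nhds l) := by
    intro X hX
    obtain ⟨K0, hK0⟩ := eventually_atTop.mp (hg X hX)
    apply conv_of_rate hsm h0 S X (K0 + 1)
    intro k hk n hn
    have h1 : f X k ≤ g k := hK0 k (by omega)
    have h2 : g k ≤ nseq k := hgn k (by omega)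
    exact hfspec X hX k n (by omega)
  -- conclusion
  have hccl : ∃ l, Tendsto (fun N : ℕ => ∑ i ∈ Finset.range N, rr S nseq i)
      atTop (nhds l) := by
    obtain ⟨l, hl⟩ := keyX Set.univ (Set.mem_insert _ _)
    refine ⟨l, ?_⟩
    apply hl.congr
    intro N
    apply Finset.sum_congr rfl
    intro i _
    rw [Set.indicator_univ]
  have hcc : CondConv (rr S nseq) := ⟨hccl, rr_not_summable hsm h0 S hg2⟩
  obtain ⟨I, hI, hdiv⟩ := hP (rr S nseq) hcc
  apply hdiv
  by_cases hIinf : I.Infinite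
  · exact keyX I (Set.mem_insert_iff.mpr (Or.inr ⟨hI, hIinf⟩))
  · exact finite_conv I (Set.not_infinite.mp hIinf) _
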